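/- In the stage game get-close-to-the-target, suppose the target k is known to lie in the integer interval {lo,…,hi} (with lo ≤ hi), player 1 plays the midpoint a₁ = ⌊(lo+hi)/2⌋, and player 2 wins the round with some action a₂. Then either a₂ ≤ a₁ and k lies in {lo,…,a₁−1}, or a₂ > a₁ and k lies in {a₁+1,…,hi}; in either case the set of targets in {lo,…,hi} consistent with the outcome has at most ⌊(hi−lo+1)/2⌋ elements. -/
import Mathlib


/-- Possible outcomes of a round of a zero-sum stage game. -/
inductive Outcome
  | P1Wins
  | P2Wins
  | Draw
deriving DecidableEq

/-- The outcome of a round of *get-close-to-the-target* with actions `a₁` (player 1),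
`a₂` (player 2) and hidden target `k`: if `|aᵢ - k| < |a₋ᵢ - k|` then player `i` wins;
if `a₁ = a₂ = a ≠ k` then player 1 wins if `a < k` and player 2 wins if `a > k`;
otherwise the round is a draw. -/
def outcome (a₁ a₂ k : ℤ) : Outcome :=
  if |a₁ - k| < |a₂ - k| then .P1Wins
  else if |a₂ - k| < |a₁ - k| then .P2Wins
  else if a₁ = a₂ ∧ a₁ ≠ k then (if a₁ < k then .P1Wins else .P2Wins)
  else .Draw

lemma p2wins_loc (a₁ a₂ k : ℤ) (hwin : outcome a₁ a₂ k = Outcome.P2Wins) :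
    (a₂ ≤ a₁ ∧ k < a₁) ∨ (a₁ < a₂ ∧ a₁ < k) := by
  unfold outcome at hwin
  rcases abs_cases (a₁ - k) with ⟨e1, f1⟩ | ⟨e1, f1⟩ <;>
    rcases abs_cases (a₂ - k) with ⟨e2, f2⟩ | ⟨e2, f2⟩ <;>
    rw [e1, e2] at hwin <;>
    split_ifs at hwin with h1 h2 h3 h4 <;>
    simp_all <;> omega

/-- In the stage game get-close-to-the-target, suppose the target `k` is known to lie in
the integer interval `{lo,…,hi}` (with `lo ≤ hi`), player 1 plays the midpoint
`a₁ = ⌊(lo+hi)/2⌋`, and player 2 wins the round with some action `a₂`. Then either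
`a₂ ≤ a₁` and `k ∈ {lo,…,a₁−1}`, or `a₂ > a₁` and `k ∈ {a₁+1,…,hi}`; in either case the
set of targets in `{lo,…,hi}` consistent with the outcome has at most
`⌊(hi−lo+1)/2⌋` elements. -/
theorem stmt3 (n lo hi a₁ a₂ k : ℤ) (hn : 1 ≤ n)
    (hlo : 1 ≤ lo) (hlohi : lo ≤ hi) (hhi : hi ≤ n)
    (hk : k ∈ Finset.Icc lo hi) (ha₂ : a₂ ∈ Finset.Icc 1 n)
    (ha₁ : a₁ = (lo + hi) / 2)
    (hwin : outcome a₁ a₂ k = Outcome.P2Wins) :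
    ((a₂ ≤ a₁ ∧ k ∈ Finset.Icc lo (a₁ - 1)) ∨ (a₁ < a₂ ∧ k ∈ Finset.Icc (a₁ + 1) hi)) ∧
    ((Finset.Icc lo hi).filter
        (fun k' => outcome a₁ a₂ k' = Outcome.P2Wins)).card ≤ ((hi - lo + 1) / 2).toNat := by
  simp only [Finset.mem_Icc] at hk ha₂
  have hloc := p2wins_loc a₁ a₂ k hwin
  constructor
  · rcases hloc with ⟨h, h'⟩ | ⟨h, h'⟩
    · exact Or.inl ⟨h, Finset.mem_Icc.mpr ⟨hk.1, by omega⟩⟩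
    · exact Or.inr ⟨h, Finset.mem_Icc.mpr ⟨by omega, hk.2⟩⟩
  · rcases le_or_gt a₂ a₁ with hc | hc
    · calc ((Finset.Icc lo hi).filter
            (fun k' => outcome a₁ a₂ k' = Outcome.P2Wins)).card
          ≤ (Finset.Icc lo (a₁ - 1)).card := by
            apply Finset.card_le_card
            intro k' hk'
            simp only [Finset.mem_filter, Finset.mem_Icc] at hk' ⊢
            have := p2wins_loc a₁ a₂ k' hk'.2
            omega
        _ ≤ ((hi - lo + 1) / 2).toNat := by
            rw [Int.card_Icc]; omega
    · calc ((Finset.Icc lo hi).filter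
            (fun k' => outcome a₁ a₂ k' = Outcome.P2Wins)).card
          ≤ (Finset.Icc (a₁ + 1) hi).card := by
            apply Finset.card_le_card
            intro k' hk'
            simp only [Finset.mem_filter, Finset.mem_Icc] at hk' ⊢
            have := p2wins_loc a₁ a₂ k' hk'.2
            omega
        _ ≤ ((hi - lo + 1) / 2).toNat := by
            rw [Int.card_Icc]; omega
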